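/- arXiv:2009.00379 — 2 statements merged into one kernel-verified Lean document; each statement's English description precedes it below -/
import Mathlib

section
/- Let H₁, H₂ be Hilbert spaces, L : H₁ → H₂ a compact injective linear operator with dense range, and f ∈ H₂ not in the range of L. Let h_α be the unique solution of α h_α + L*L h_α = L*f for α > 0. Then ‖h_α‖_{H₁} → ∞ as α → 0⁺. -/
open ContinuousLinearMap Filter Topology

local notation "⟪" x ", " y "⟫" => @inner ℂ _ _ x y

/-- Let `L : H₁ → H₂` be a compact injective linear operator between Hilbert
spaces with dense range, and let `f ∈ H₂` not lie in the range of `L`. If `h α` denotes the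
unique solution of the Tikhonov equation `α h + L*L h = L* f` (`α > 0`), then `‖h α‖ → ∞` as
`α → 0⁺`. -/
theorem tikhonov_blowup
    {H₁ H₂ : Type*} [NormedAddCommGroup H₁] [InnerProductSpace ℂ H₁] [CompleteSpace H₁]
    [NormedAddCommGroup H₂] [InnerProductSpace ℂ H₂] [CompleteSpace H₂]
    (L : H₁ →L[ℂ] H₂) (hL : IsCompactOperator L) (hinj : Function.Injective L)
    (hdense : DenseRange L) (f : H₂) (hf : f ∉ Set.range L)
    (h : ℝ → H₁)
    (hsol : ∀ α : ℝ, 0 < α → (α : ℂ) • (h α) + (adjoint L) (L (h α)) = (adjoint L) f) :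
    Tendsto (fun α => ‖h α‖) (nhdsWithin 0 (Set.Ioi 0)) atTop := by
  by_contra hcon
  have hb : ∃ b : ℝ, ∃ᶠ α in nhdsWithin (0:ℝ) (Set.Ioi 0), ‖h α‖ < b := by
    by_contra hC
    push_neg at hC
    exact hcon (tendsto_atTop.2 fun b => (hC b).mono fun α hα => hα)
  obtain ⟨b, hb⟩ := hb
  have hb' : ∃ᶠ α in nhdsWithin (0:ℝ) (Set.Ioi 0), ‖h α‖ < b ∧ 0 < α :=
    hb.and_eventually (eventually_mem_nhdsWithin)
  obtain ⟨a, ha_to, ha⟩ := Filter.exists_seq_forall_of_frequently hb'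
  set x : ℕ → H₁ := fun n => h (a n) with hxdef
  have hapos : ∀ n, 0 < a n := fun n => (ha n).2
  have ha0 : Tendsto a atTop (nhds 0) := ha_to.mono_right nhdsWithin_le_nhds
  set M : ℝ := max b 0 with hMdef
  have hM : ∀ n, ‖x n‖ ≤ M := fun n => le_trans (ha n).1.le (le_max_left _ _)
  have hM0 : (0:ℝ) ≤ M := le_max_right _ _
  -- Step 1: ⟪x n, L*L w⟫ → ⟪f, L w⟫
  have key : ∀ w : H₁, Tendsto (fun n => ⟪x n, adjoint L (L w)⟫) atTop (nhds ⟪f, L w⟫) := by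
    intro w
    have heq : ∀ n, ⟪x n, adjoint L (L w)⟫ = ⟪f, L w⟫ - (a n : ℂ) * ⟪x n, w⟫ := by
      intro n
      have e2 : adjoint L (L (x n)) = adjoint L f - (a n : ℂ) • x n := by
        have := hsol (a n) (hapos n)
        rw [eq_sub_iff_add_eq, add_comm]
        exact this
      calc ⟪x n, adjoint L (L w)⟫ = ⟪adjoint L (L (x n)), w⟫ := by
            rw [ContinuousLinearMap.adjoint_inner_right, ContinuousLinearMap.adjoint_inner_left]
        _ = ⟪adjoint L f - (a n : ℂ) • x n, w⟫ := by rw [e2]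
        _ = ⟪f, L w⟫ - (a n : ℂ) * ⟪x n, w⟫ := by
            rw [inner_sub_left, inner_smul_left, ContinuousLinearMap.adjoint_inner_left]
            norm_num
    have hz : Tendsto (fun n => (a n : ℂ) * ⟪x n, w⟫) atTop (nhds 0) := by
      refine squeeze_zero_norm (a := fun n => |a n| * (M * ‖w‖)) (fun n => ?_) ?_
      · rw [norm_mul, Complex.norm_real]
        exact mul_le_mul_of_nonneg_left
          ((norm_inner_le_norm _ _).trans
            (mul_le_mul_of_nonneg_right (hM n) (norm_nonneg w))) (abs_nonneg _)
      · simpa using (ha0.abs.mul_const (M * ‖w‖))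
    have := (tendsto_const_nhds (x := ⟪f, L w⟫) (f := atTop)).sub hz
    simp only [sub_zero] at this
    exact this.congr (fun n => (heq n).symm)
  -- Step 2: range (L* ∘ L) is dense
  set T : H₁ →L[ℂ] H₁ := (adjoint L).comp L with hTdef
  have hdenseD : Dense ((LinearMap.range (T : H₁ →ₗ[ℂ] H₁) : Submodule ℂ H₁) : Set H₁) := by
    rw [Submodule.dense_iff_topologicalClosure_eq_top,
      Submodule.topologicalClosure_eq_top_iff, Submodule.eq_bot_iff]
    intro v hv
    have h1 : ⟪T v, v⟫ = 0 := hv (T v) (LinearMap.mem_range.mpr ⟨v, rfl⟩)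
    have h2 : ⟪L v, L v⟫ = (0:ℂ) := by
      rw [← h1]
      simp [hTdef, ContinuousLinearMap.adjoint_inner_left]
    have h3 : L v = 0 := inner_self_eq_zero.mp h2
    have : L v = L 0 := by simpa using h3
    simpa using hinj this
  -- Step 3: weak limit via Riesz
  have hconv : ∀ v : H₁, ∃ c : ℂ, Tendsto (fun n => ⟪x n, v⟫) atTop (nhds c) := by
    intro v
    have hc : CauchySeq (fun n => ⟪x n, v⟫) := by
      rw [Metric.cauchySeq_iff]
      intro ε hε
      have hδ : (0:ℝ) < ε / (3 * (2 * M + 1)) := by positivity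
      obtain ⟨d, hd_mem, hdist⟩ := Metric.mem_closure_iff.1 (hdenseD v) _ hδ
      obtain ⟨w, hw⟩ := LinearMap.mem_range.mp (SetLike.mem_coe.mp hd_mem)
      have hcs := (key w).cauchySeq
      rw [Metric.cauchySeq_iff] at hcs
      obtain ⟨N, hN⟩ := hcs (ε / 3) (by linarith)
      refine ⟨N, fun m hm n hn => ?_⟩
      have hdd : dist ⟪x m, d⟫ ⟪x n, d⟫ < ε / 3 := by
        have := hN m hm n hn
        rw [← hw] at *
        simpa [hTdef] using this
      have expand : ⟪x m, v⟫ - ⟪x n, v⟫ =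
          (⟪x m, d⟫ - ⟪x n, d⟫) + ⟪x m - x n, v - d⟫ := by
        rw [inner_sub_left, inner_sub_right, inner_sub_right]
        ring
      have hbd : ‖⟪x m - x n, v - d⟫‖ ≤ (2 * M) * ‖v - d‖ := by
        refine (norm_inner_le_norm _ _).trans (mul_le_mul_of_nonneg_right ?_ (norm_nonneg _))
        calc ‖x m - x n‖ ≤ ‖x m‖ + ‖x n‖ := norm_sub_le _ _
          _ ≤ 2 * M := by linarith [hM m, hM n]
      have hvd : ‖v - d‖ < ε / (3 * (2 * M + 1)) := by
        rwa [← dist_eq_norm]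
      rw [dist_eq_norm, expand]
      calc ‖(⟪x m, d⟫ - ⟪x n, d⟫) + ⟪x m - x n, v - d⟫‖
          ≤ ‖⟪x m, d⟫ - ⟪x n, d⟫‖ + ‖⟪x m - x n, v - d⟫‖ := norm_add_le _ _
        _ < ε / 3 + (2 * M) * (ε / (3 * (2 * M + 1))) := by
            have h1 : ‖⟪x m, d⟫ - ⟪x n, d⟫‖ < ε / 3 := by rwa [← dist_eq_norm]
            have h2 : (2 * M) * ‖v - d‖ ≤ (2 * M) * (ε / (3 * (2 * M + 1))) :=
              mul_le_mul_of_nonneg_left hvd.le (by linarith)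
            calc ‖⟪x m, d⟫ - ⟪x n, d⟫‖ + ‖⟪x m - x n, v - d⟫‖
                ≤ ‖⟪x m, d⟫ - ⟪x n, d⟫‖ + (2 * M) * ‖v - d‖ := by linarith [hbd]
              _ < ε / 3 + (2 * M) * (ε / (3 * (2 * M + 1))) := by linarith
        _ ≤ ε / 3 + ε / 3 := by
            have hpos : (0:ℝ) < 2 * M + 1 := by linarith
            have e : (2 * M + 1) * (ε / (3 * (2 * M + 1))) = ε / 3 := by
              field_simp
            have : (2 * M) * (ε / (3 * (2 * M + 1))) ≤ ε / 3 := by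
              calc (2 * M) * (ε / (3 * (2 * M + 1)))
                  ≤ (2 * M + 1) * (ε / (3 * (2 * M + 1))) :=
                    mul_le_mul_of_nonneg_right (by linarith) hδ.le
                _ = ε / 3 := e
            linarith
        _ < ε := by linarith
    exact cauchySeq_tendsto_of_complete hc
  choose Φ hΦ using hconv
  have hΦbound : ∀ v, ‖Φ v‖ ≤ M * ‖v‖ := fun v =>
    le_of_tendsto (hΦ v).norm (Eventually.of_forall fun n =>
      (norm_inner_le_norm _ _).trans (mul_le_mul_of_nonneg_right (hM n) (norm_nonneg v)))
  have hadd : ∀ v v', Φ (v + v') = Φ v + Φ v' := fun v v' =>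
    tendsto_nhds_unique (hΦ (v + v')) (by
      simpa only [inner_add_right] using (hΦ v).add (hΦ v'))
  have hsmul : ∀ (c : ℂ) v, Φ (c • v) = c * Φ v := fun c v =>
    tendsto_nhds_unique (hΦ (c • v)) (by
      simpa only [inner_smul_right] using (hΦ v).const_mul c)
  set Φlin : H₁ →ₗ[ℂ] ℂ :=
    { toFun := Φ
      map_add' := hadd
      map_smul' := hsmul } with hΦlin
  set Φcont : H₁ →L[ℂ] ℂ := Φlin.mkContinuous M hΦbound with hΦcont
  set x₀ : H₁ := (InnerProductSpace.toDual ℂ H₁).symm Φcont with hx₀def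
  have hx₀ : ∀ v, ⟪x₀, v⟫ = Φ v := fun v => InnerProductSpace.toDual_symm_apply
  -- Step 4: f = L x₀
  have hfin : ∀ w : H₁, ⟪f - L x₀, L w⟫ = 0 := by
    intro w
    have h2 : ⟪x₀, adjoint L (L w)⟫ = ⟪f, L w⟫ := by
      rw [hx₀]
      exact tendsto_nhds_unique (hΦ _) (key w)
    rw [ContinuousLinearMap.adjoint_inner_right] at h2
    rw [inner_sub_left, h2, sub_self]
  have hall : (fun u : H₂ => ⟪f - L x₀, u⟫) = fun _ => (0:ℂ) := by
    refine Continuous.ext_on hdense (continuous_const.inner continuous_id) continuous_const ?_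
    rintro u ⟨w, rfl⟩
    exact hfin w
  have hz : ⟪f - L x₀, f - L x₀⟫ = (0:ℂ) := congrFun hall _
  exact hf ⟨x₀, (sub_eq_zero.mp (inner_self_eq_zero.mp hz)).symm⟩
end

section
/- Let H₁, H₂ be Hilbert spaces and L : H₁ → H₂ be compact, injective, with dense range, and let f ∈ H₂ with 0 < δ < ‖f‖. For α > 0 let h_α be the unique solution of αh_α + L*Lh_α = L*f. Then the function α ↦ ‖Lh_α − f‖ is continuous and strictly monotonically increasing on (0,∞), with limit 0 as α → 0⁺ and limit ‖f‖ as α → ∞; consequently there exists exactly one α > 0 with ‖Lh_α − f‖ = δ. -/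
open ContinuousLinearMap Filter Topology Set


open ContinuousLinearMap Filter Topology Set

namespace Morozov

variable {H : Type*} [NormedAddCommGroup H] [InnerProductSpace ℂ H] [CompleteSpace H]

local notation "⟪" x ", " y "⟫" => @inner ℂ _ _ x y

noncomputable def T (S : H →L[ℂ] H) (s : ℝ) : H →L[ℂ] H :=
  ContinuousLinearMap.id ℂ H + (s : ℂ) • S

set_option linter.unusedSectionVars false in
lemma T_apply (S : H →L[ℂ] H) (s : ℝ) (x : H) : T S s x = x + (s : ℂ) • S x := rfl

lemma re_inner_T (S : H →L[ℂ] H) (s : ℝ) (x : H) :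
    (⟪T S s x, x⟫).re = ‖x‖ ^ 2 + s * (⟪S x, x⟫).re := by
  rw [T_apply, inner_add_left, inner_smul_left]
  simp [Complex.conj_ofReal, ← Complex.ofReal_pow, inner_self_eq_norm_sq_to_K]

lemma T_norm_le (S : H →L[ℂ] H) (hnn : ∀ x : H, 0 ≤ (⟪S x, x⟫).re)
    {s : ℝ} (hs : 0 ≤ s) (x : H) : ‖x‖ ≤ ‖T S s x‖ := by
  rcases eq_or_ne x 0 with rfl | hx
  · simp
  · have h1 : ‖x‖ ^ 2 ≤ (⟪T S s x, x⟫).re := by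
      rw [re_inner_T]
      nlinarith [hnn x]
    have h2 : (⟪T S s x, x⟫).re ≤ ‖T S s x‖ * ‖x‖ := by
      simpa using re_inner_le_norm (𝕜 := ℂ) (T S s x) x
    have hxpos : 0 < ‖x‖ := norm_pos_iff.mpr hx
    nlinarith

lemma T_inj (S : H →L[ℂ] H) (hnn : ∀ x : H, 0 ≤ (⟪S x, x⟫).re)
    {s : ℝ} (hs : 0 ≤ s) {x y : H} (hxy : T S s x = T S s y) : x = y := by
  have := T_norm_le S hnn hs (x - y)
  rw [map_sub, hxy, sub_self, norm_zero] at this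
  have : ‖x - y‖ = 0 := le_antisymm this (norm_nonneg _)
  simpa [sub_eq_zero] using norm_eq_zero.mp this

lemma T_surj (S : H →L[ℂ] H) (hnn : ∀ x : H, 0 ≤ (⟪S x, x⟫).re)
    {s : ℝ} (hs : 0 ≤ s) : Function.Surjective (T S s) := by
  have hanti : AntilipschitzWith 1 (T S s) :=
    ContinuousLinearMap.antilipschitz_of_bound _ (fun x => by
      simpa using T_norm_le S hnn hs x)
  have hclosed : IsClosed (Set.range (T S s)) :=
    hanti.isClosed_range (T S s).uniformContinuous
  have hrange : (LinearMap.range (T S s : H →ₗ[ℂ] H)).topologicalClosure = ⊤ := by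
    rw [Submodule.topologicalClosure_eq_top_iff]
    rw [Submodule.eq_bot_iff]
    intro x hx
    have h0 : ⟪T S s x, x⟫ = 0 := hx _ (LinearMap.mem_range_self _ x)
    have h0' : (⟪T S s x, x⟫).re = 0 := by rw [h0]; simp
    rw [re_inner_T] at h0'
    have : ‖x‖ ^ 2 = 0 := by nlinarith [hnn x, sq_nonneg ‖x‖]
    simpa using pow_eq_zero_iff (n := 2) (by norm_num) |>.mp this
  have : LinearMap.range (T S s : H →ₗ[ℂ] H) = ⊤ := by
    rw [← hrange]
    exact (IsClosed.submodule_topologicalClosure_eq (by exact hclosed)).symm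
  exact LinearMap.range_eq_top.mp this

end Morozov

section Main

local notation "⟪" x ", " y "⟫" => @inner ℂ _ _ x y

set_option maxHeartbeats 1000000 in

/-- **Morozov discrepancy principle.** Let `L : H₁ → H₂` be compact, injective,
with dense range between Hilbert spaces, `f ∈ H₂` and `0 < δ < ‖f‖`. If `h α` solves the
Tikhonov equation `α h + L*L h = L* f` for every `α > 0`, then `α ↦ ‖L (h α) − f‖` is
continuous and strictly increasing on `(0,∞)`, tends to `0` as `α → 0⁺` and to `‖f‖` as
`α → ∞`; consequently there is exactly one `α > 0` with `‖L (h α) − f‖ = δ`. -/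
theorem morozov_discrepancy
    {H₁ H₂ : Type*} [NormedAddCommGroup H₁] [InnerProductSpace ℂ H₁] [CompleteSpace H₁]
    [NormedAddCommGroup H₂] [InnerProductSpace ℂ H₂] [CompleteSpace H₂]
    (L : H₁ →L[ℂ] H₂) (hL : IsCompactOperator L) (hinj : Function.Injective L)
    (hdense : DenseRange L)
    (f : H₂) (δ : ℝ) (hδ : 0 < δ) (hδf : δ < ‖f‖)
    (h : ℝ → H₁)
    (hsol : ∀ α : ℝ, 0 < α → (α : ℂ) • (h α) + (adjoint L) (L (h α)) = (adjoint L) f) :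
    ContinuousOn (fun α : ℝ => ‖L (h α) - f‖) (Ioi 0) ∧
    StrictMonoOn (fun α : ℝ => ‖L (h α) - f‖) (Ioi 0) ∧
    Tendsto (fun α : ℝ => ‖L (h α) - f‖) (nhdsWithin 0 (Ioi 0)) (𝓝 0) ∧
    Tendsto (fun α : ℝ => ‖L (h α) - f‖) atTop (𝓝 ‖f‖) ∧
    (∃! α : ℝ, 0 < α ∧ ‖L (h α) - f‖ = δ) := by
  classical
  set S : H₂ →L[ℂ] H₂ := L ∘L (adjoint L) with hSdef
  set r : ℝ → H₂ := fun α => L (h α) - f with hrdef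
  have hf0 : f ≠ 0 := by
    intro hf; rw [hf, norm_zero] at hδf; linarith
  have hSapp : ∀ x : H₂, S x = L ((adjoint L) x) := fun x => rfl
  have hadj_inj : ∀ x : H₂, (adjoint L) x = 0 → x = 0 := by
    intro x hx
    have hcl : IsClosed {y : H₂ | ⟪y, x⟫ = 0} :=
      isClosed_eq (Continuous.inner continuous_id continuous_const) continuous_const
    have hsub : Set.range L ⊆ {y : H₂ | ⟪y, x⟫ = 0} := by
      rintro _ ⟨z, rfl⟩
      show ⟪L z, x⟫ = 0
      rw [← ContinuousLinearMap.adjoint_inner_right, hx, inner_zero_right]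
    have huniv : (Set.univ : Set H₂) ⊆ {y : H₂ | ⟪y, x⟫ = 0} := by
      rw [← hdense.closure_range]
      exact closure_minimal hsub hcl
    have hxx : ⟪x, x⟫ = 0 := huniv (mem_univ x)
    exact inner_self_eq_zero.mp hxx
  have hre : ∀ x : H₂, (⟪S x, x⟫).re = ‖(adjoint L) x‖ ^ 2 := by
    intro x
    rw [hSapp, ← ContinuousLinearMap.adjoint_inner_right]
    have := inner_self_eq_norm_sq (𝕜 := ℂ) ((adjoint L) x)
    simpa using this
  have hnn : ∀ x : H₂, 0 ≤ (⟪S x, x⟫).re := by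
    intro x; rw [hre]; positivity
  have hpdef : ∀ x : H₂, x ≠ 0 → 0 < (⟪S x, x⟫).re := by
    intro x hx
    rw [hre]
    have hne : (adjoint L) x ≠ 0 := fun hc => hx (hadj_inj x hc)
    exact pow_pos (norm_pos_iff.mpr hne) 2
  -- the basic equation
  have hTeq : ∀ α : ℝ, 0 < α → Morozov.T S (1/α) (r α) = -f := by
    intro α hα
    have e1 : (α : ℂ) • L (h α) + S (L (h α)) = S f := by
      have := congrArg L (hsol α hα)
      simpa [map_add, map_smul, hSapp] using this
    have e2 : S (r α) = -((α : ℂ) • (L (h α))) := by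
      show S (L (h α) - f) = _
      rw [map_sub, ← e1]; abel
    rw [Morozov.T_apply, e2, smul_neg, smul_smul]
    have hα' : (α : ℂ) ≠ 0 := by exact_mod_cast hα.ne'
    have hcoe : ((1/α : ℝ) : ℂ) * (α : ℂ) = 1 := by
      push_cast
      field_simp
    rw [hcoe, one_smul]
    simp only [hrdef]
    abel
  have hnormle : ∀ α : ℝ, 0 < α → ∀ x : H₂, ‖x‖ ≤ ‖Morozov.T S (1/α) x‖ :=
    fun α hα => Morozov.T_norm_le S hnn (by positivity)
  have hb : ∀ α : ℝ, 0 < α → ‖r α‖ ≤ ‖f‖ := by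
    intro α hα
    have := hnormle α hα (r α)
    rwa [hTeq α hα, norm_neg] at this
  -- Lipschitz-type bound
  have hdiff : ∀ α β : ℝ, 0 < α → 0 < β →
      ‖r α - r β‖ ≤ |1/β - 1/α| * ‖S (r β)‖ := by
    intro α β hα hβ
    have key : Morozov.T S (1/α) (r α - r β) = ((1/β - 1/α : ℝ) : ℂ) • S (r β) := by
      rw [map_sub, hTeq α hα, ← hTeq β hβ, Morozov.T_apply, Morozov.T_apply]
      push_cast
      module
    have hle := hnormle α hα (r α - r β)
    rw [key, norm_smul, Complex.norm_real, Real.norm_eq_abs] at hle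
    exact hle
  -- continuity
  have hcont : ContinuousOn r (Ioi 0) := by
    intro β hβ
    have hβ' : (0:ℝ) < β := hβ
    rw [ContinuousWithinAt, tendsto_iff_dist_tendsto_zero]
    have haux : ContinuousAt (fun α : ℝ => |1/β - 1/α| * ‖S (r β)‖) β := by
      have h1 : ContinuousAt (fun α : ℝ => 1/α) β :=
        ContinuousAt.div continuousAt_const continuousAt_id hβ'.ne'
      exact ((continuousAt_const.sub h1).abs).mul continuousAt_const
    have h0 : Tendsto (fun α : ℝ => |1/β - 1/α| * ‖S (r β)‖) (𝓝[Ioi 0] β) (𝓝 0) := by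
      have h2 := haux.continuousWithinAt (s := Ioi 0)
      simpa [ContinuousWithinAt] using h2
    refine squeeze_zero' ?_ ?_ h0
    · filter_upwards with α using dist_nonneg
    · filter_upwards [self_mem_nhdsWithin] with α hα
      rw [dist_eq_norm]
      exact hdiff α β hα hβ'
  have hcontnorm : ContinuousOn (fun α : ℝ => ‖r α‖) (Ioi 0) :=
    continuous_norm.comp_continuousOn hcont
  -- strict monotonicity
  have hmono : StrictMonoOn (fun α : ℝ => ‖r α‖) (Ioi 0) := by
    intro α hα β hβ hαβ
    have hα' : (0:ℝ) < α := hα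
    have hβ' : (0:ℝ) < β := hβ
    have hst : 1/β < 1/α := one_div_lt_one_div_of_lt hα' hαβ
    have hβinv : (0:ℝ) < 1/β := by positivity
    have hαinv : (0:ℝ) < 1/α := by positivity
    have hεpos : 0 < 1/α - 1/β := by linarith
    have hb0 : r β ≠ 0 := by
      intro hc
      apply hf0
      have h3 := hTeq β hβ'
      rw [hc, map_zero] at h3
      simpa using h3.symm
    obtain ⟨q, hq⟩ := Morozov.T_surj S hnn (s := 1/α) hαinv.le (r β)
    have hq0 : q ≠ 0 := by
      rintro rfl
      rw [map_zero] at hq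
      exact hb0 hq.symm
    have claim1 : Morozov.T S (1/α) (S q) = S (r β) := by
      rw [← hq]
      simp only [Morozov.T_apply, map_add, map_smul]
    have claim2 : Morozov.T S (1/α) (r β)
        = -f + ((1/α - 1/β : ℝ) : ℂ) • S (r β) := by
      rw [← hTeq β hβ', Morozov.T_apply, Morozov.T_apply]
      push_cast
      module
    have hkey : r α = r β - ((1/α - 1/β : ℝ) : ℂ) • S q := by
      apply Morozov.T_inj S hnn hαinv.le
      rw [hTeq α hα', map_sub, map_smul, claim1, claim2]
      abel
    set ε : ℝ := 1/α - 1/β with hεdef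
    set c1 : ℝ := (⟪S q, q⟫).re with hc1def
    set c2 : ℝ := ‖S q‖ ^ 2 with hc2def
    have hc1pos : 0 < c1 := hpdef q hq0
    have hc2nn : 0 ≤ c2 := by positivity
    have e_re : (⟪r β, (ε : ℂ) • S q⟫).re = ε * (c1 + (1/α) * c2) := by
      rw [inner_smul_right, ← hq, Morozov.T_apply, inner_add_left, inner_smul_left,
        Complex.conj_ofReal, Complex.re_ofReal_mul, Complex.add_re, Complex.re_ofReal_mul]
      have h1 : (⟪q, S q⟫).re = c1 := by
        rw [hc1def]
        exact inner_re_symm (𝕜 := ℂ) q (S q)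
      have h2 : (⟪S q, S q⟫).re = c2 := by
        rw [hc2def]
        have := inner_self_eq_norm_sq (𝕜 := ℂ) (S q)
        simpa using this
      rw [h1, h2]
    have e_norm : ‖(ε : ℂ) • S q‖ ^ 2 = ε ^ 2 * c2 := by
      rw [norm_smul, Complex.norm_real, Real.norm_eq_abs, mul_pow, sq_abs, hc2def]
    have hsq : ‖r α‖ ^ 2 = ‖r β‖ ^ 2 - 2 * (ε * (c1 + (1/α) * c2)) + ε ^ 2 * c2 := by
      rw [hkey, norm_sub_sq (𝕜 := ℂ)]
      rw [e_norm]
      have : RCLike.re ⟪r β, (ε : ℂ) • S q⟫ = ε * (c1 + (1/α) * c2) := by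
        rw [RCLike.re_to_complex]
        exact e_re
      rw [this]
    have hεlt : ε < 1/α := by rw [hεdef]; linarith
    have hlt : ‖r α‖ ^ 2 < ‖r β‖ ^ 2 := by
      rw [hsq]
      nlinarith [mul_pos hεpos hc1pos,
        mul_nonneg (mul_nonneg hεpos.le (sub_nonneg.mpr hεlt.le)) hc2nn,
        mul_nonneg (mul_nonneg hεpos.le hαinv.le) hc2nn]
    exact lt_of_pow_lt_pow_left₀ 2 (norm_nonneg (r β)) hlt
  -- limit at 0 from the right
  have htend0 : Tendsto (fun α : ℝ => ‖r α‖) (𝓝[Ioi 0] 0) (𝓝 0) := by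
    have hdenseS : Dense (SetLike.coe (LinearMap.range (S : H₂ →ₗ[ℂ] H₂)) : Set H₂) := by
      rw [Submodule.dense_iff_topologicalClosure_eq_top,
        Submodule.topologicalClosure_eq_top_iff, Submodule.eq_bot_iff]
      intro x hx
      by_contra hx0
      have h0 : ⟪S x, x⟫ = 0 := hx _ (LinearMap.mem_range_self _ x)
      have := hpdef x hx0
      rw [h0] at this
      simp at this
    rw [Metric.tendsto_nhdsWithin_nhds]
    intro ε hε
    obtain ⟨y, hymem, hydist⟩ := hdenseS.exists_dist_lt f (half_pos hε)
    obtain ⟨g, hg⟩ := hymem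
    have hfg : ‖f - S g‖ < ε/2 := by
      rw [← hg] at hydist
      rw [← dist_eq_norm]
      exact hydist
    refine ⟨ε/(4*(‖g‖+1)), by positivity, ?_⟩
    intro α hαI hαdist
    have hα : (0:ℝ) < α := hαI
    have hαinv : (0:ℝ) < 1/α := by positivity
    have hαlt : α < ε/(4*(‖g‖+1)) := by
      rw [Real.dist_eq, sub_zero, abs_of_pos hα] at hαdist
      exact hαdist
    obtain ⟨p, hp⟩ := Morozov.T_surj S hnn (s := 1/α) hαinv.le (f - S g)
    obtain ⟨p', hp'⟩ := Morozov.T_surj S hnn (s := 1/α) hαinv.le g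
    have hqT : Morozov.T S (1/α) ((α:ℂ) • (g - p')) = S g := by
      rw [map_smul, map_sub, hp', Morozov.T_apply, add_sub_cancel_left, smul_smul]
      have hα' : (α : ℂ) ≠ 0 := by exact_mod_cast hα.ne'
      have hcoe : (α : ℂ) * ((1/α : ℝ) : ℂ) = 1 := by
        push_cast
        field_simp
      rw [hcoe, one_smul]
    have hkey : r α = -p - (α:ℂ) • (g - p') := by
      apply Morozov.T_inj S hnn hαinv.le
      rw [hTeq α hα, map_sub, map_neg, hp, hqT]
      abel
    have hp'le : ‖p'‖ ≤ ‖g‖ := by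
      have := hnormle α hα p'
      rwa [hp'] at this
    have hple : ‖p‖ ≤ ‖f - S g‖ := by
      have := hnormle α hα p
      rwa [hp] at this
    have hbnd : ‖r α‖ ≤ ‖f - S g‖ + α * (‖g‖ + ‖p'‖) := by
      rw [hkey]
      calc ‖-p - (α:ℂ) • (g - p')‖ ≤ ‖-p‖ + ‖(α:ℂ) • (g - p')‖ := norm_sub_le _ _
        _ = ‖p‖ + |α| * ‖g - p'‖ := by rw [norm_neg, norm_smul, Complex.norm_real, Real.norm_eq_abs]
        _ ≤ ‖f - S g‖ + α * (‖g‖ + ‖p'‖) := by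
            rw [abs_of_pos hα]
            have := norm_sub_le g p'
            have h4 : α * ‖g - p'‖ ≤ α * (‖g‖ + ‖p'‖) :=
              mul_le_mul_of_nonneg_left this hα.le
            linarith
    rw [Real.dist_eq, sub_zero, abs_of_nonneg (norm_nonneg _)]
    have h5 : α * (‖g‖ + ‖p'‖) ≤ α * (2 * ‖g‖) := by
      apply mul_le_mul_of_nonneg_left _ hα.le
      linarith
    have h6 : α * (2 * ‖g‖) < ε/2 := by
      have h7 : α * (2 * ‖g‖) ≤ (ε/(4*(‖g‖+1))) * (2 * ‖g‖) := by
        apply mul_le_mul_of_nonneg_right hαlt.le (by positivity)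
      have h8 : (ε/(4*(‖g‖+1))) * (2 * ‖g‖) < ε/2 := by
        rw [div_mul_eq_mul_div, div_lt_iff₀ (by positivity)]
        nlinarith [norm_nonneg g]
      linarith
    linarith
  -- limit at infinity
  have htendtop : Tendsto (fun α : ℝ => ‖r α‖) atTop (𝓝 ‖f‖) := by
    have hlim : Tendsto r atTop (𝓝 (-f)) := by
      rw [tendsto_iff_norm_sub_tendsto_zero]
      refine squeeze_zero' (g := fun α : ℝ => ‖S f‖ * α⁻¹) ?_ ?_ ?_
      · filter_upwards with α using norm_nonneg _
      · filter_upwards [eventually_gt_atTop (0:ℝ)] with α hα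
        have hkeyT : Morozov.T S (1/α) (r α - -f) = ((1/α : ℝ) : ℂ) • S f := by
          rw [map_sub, hTeq α hα, map_neg, Morozov.T_apply]
          push_cast
          module
        have hle := hnormle α hα (r α - -f)
        rw [hkeyT, norm_smul, Complex.norm_real, Real.norm_eq_abs] at hle
        calc ‖r α - -f‖ ≤ |1/α| * ‖S f‖ := hle
          _ = ‖S f‖ * α⁻¹ := by
              rw [abs_of_pos (by positivity), one_div, mul_comm]
      · simpa using (tendsto_inv_atTop_zero (𝕜 := ℝ)).const_mul ‖S f‖
    have := hlim.norm
    rwa [norm_neg] at this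
  -- existence and uniqueness
  have huniq : ∃! α : ℝ, 0 < α ∧ ‖r α‖ = δ := by
    have hev0 : ∀ᶠ α in 𝓝[Ioi 0] (0:ℝ), ‖r α‖ < δ := htend0.eventually_lt_const hδ
    obtain ⟨α₀, hα₀lt, hα₀pos⟩ := (hev0.and self_mem_nhdsWithin).exists
    have hevtop : ∀ᶠ α in atTop, δ < ‖r α‖ ∧ α₀ < α :=
      (htendtop.eventually_const_lt hδf).and (eventually_gt_atTop α₀)
    obtain ⟨α₁, hα₁gt, hα₀₁⟩ := hevtop.exists
    have hα₀pos' : (0:ℝ) < α₀ := hα₀pos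
    have hα₁pos : (0:ℝ) < α₁ := hα₀pos'.trans hα₀₁
    have hsub : Icc α₀ α₁ ⊆ Ioi 0 := fun x hx => lt_of_lt_of_le hα₀pos' hx.1
    have hIVT := intermediate_value_Icc hα₀₁.le (hcontnorm.mono hsub)
    have hδmem : δ ∈ Icc ‖r α₀‖ ‖r α₁‖ := ⟨hα₀lt.le, hα₁gt.le⟩
    obtain ⟨α, hαmem, hαδ⟩ := hIVT hδmem
    refine ⟨α, ⟨hsub hαmem, hαδ⟩, ?_⟩
    rintro α' ⟨hα'pos, hα'δ⟩
    exact hmono.injOn hα'pos (hsub hαmem) (hα'δ.trans hαδ.symm)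
  exact ⟨hcontnorm, hmono, htend0, htendtop, huniq⟩

end Main
end
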